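/- arXiv:2511.20053 — 3 statements merged into one kernel-verified Lean document; each statement's English description precedes it below -/
import Mathlib

section
/- Let λ ∈ ℂ with |λ| = 1 and n ≥ 1. Then the normalized powers (1 / C(m, n)) · J(λ, n+1)^m, viewed as matrices, satisfy: every entry except the (1, n+1)-entry tends to 0 as m → ∞, while the (1, n+1)-entry has modulus tending to 1. -/
open Filter Topology

/-- The `k × k` upper-triangular Jordan block with eigenvalue `lam`. -/
def jordanBlock (lam : ℂ) (k : ℕ) : Matrix (Fin k) (Fin k) ℂ :=
  fun i j => if (j : ℕ) = (i : ℕ) then lam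
    else if (j : ℕ) = (i : ℕ) + 1 then 1 else 0

lemma jordanBlock_pow_apply (lam : ℂ) (k : ℕ) (m : ℕ) (i j : Fin k) :
    (jordanBlock lam k ^ m) i j =
      if (i : ℕ) ≤ (j : ℕ) then
        ((m.choose ((j : ℕ) - (i : ℕ)) : ℂ)) * lam ^ (m - ((j : ℕ) - (i : ℕ)))
      else 0 := by
  induction m generalizing i j with
  | zero =>
    rw [pow_zero, Matrix.one_apply]
    by_cases h : i = j
    · subst h; simp
    · have : ¬ ((i : ℕ) = (j : ℕ)) := fun hh => h (Fin.ext hh)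
      rw [if_neg h]
      by_cases h2 : (i : ℕ) ≤ (j : ℕ)
      · rw [if_pos h2, Nat.choose_eq_zero_of_lt (by omega)]
        simp
      · rw [if_neg h2]
  | succ m ih =>
    rw [pow_succ, Matrix.mul_apply]
    have hJ : ∀ l : Fin k, jordanBlock lam k l j =
        (if l = j then lam else 0) + (if ((l : ℕ) + 1 = (j : ℕ)) then 1 else 0) := by
      intro l
      simp only [jordanBlock]
      by_cases h1 : (j : ℕ) = (l : ℕ)
      · have : l = j := Fin.ext h1.symm
        subst this
        simp
      · have hlj : l ≠ j := fun hh => h1 (by rw [hh])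
        rw [if_neg h1, if_neg hlj]
        by_cases h2 : (j : ℕ) = (l : ℕ) + 1
        · rw [if_pos h2, if_pos h2.symm]; ring
        · rw [if_neg h2, if_neg (fun hh => h2 hh.symm)]; ring
    simp only [hJ, mul_add, Finset.sum_add_distrib, mul_ite, mul_one, mul_zero]
    rw [Finset.sum_ite_eq' Finset.univ j (fun l => (jordanBlock lam k ^ m) i l * lam)]
    simp only [Finset.mem_univ, if_true]
    by_cases hj0 : (j : ℕ) = 0
    · have hsum : (∑ l : Fin k, if ((l : ℕ) + 1 = (j : ℕ)) then (jordanBlock lam k ^ m) i l else 0) = 0 :=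
        Finset.sum_eq_zero (fun l _ => by rw [if_neg (by omega)])
      rw [hsum, add_zero, ih]
      by_cases h : (i : ℕ) ≤ (j : ℕ)
      · simp only [if_pos h]
        have : (j : ℕ) - (i : ℕ) = 0 := by omega
        rw [this]
        simp only [Nat.choose_zero_right, Nat.cast_one, one_mul, Nat.sub_zero, pow_succ]
      · simp only [if_neg h, zero_mul]
    · -- j ≥ 1
      have hjlt : (j : ℕ) - 1 < k := by have := j.isLt; omega
      set j' : Fin k := ⟨(j : ℕ) - 1, hjlt⟩ with hj'
      have hcond : ∀ l : Fin k, ((l : ℕ) + 1 = (j : ℕ)) ↔ l = j' := by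
        intro l
        constructor
        · intro h; apply Fin.ext; simp [hj']; omega
        · intro h; subst h; simp [hj']; omega
      have hsum : (∑ l : Fin k, if ((l : ℕ) + 1 = (j : ℕ)) then (jordanBlock lam k ^ m) i l else 0)
          = (jordanBlock lam k ^ m) i j' := by
        rw [Finset.sum_congr rfl (fun l _ => by rw [if_congr (hcond l) rfl rfl]),
          Finset.sum_ite_eq' Finset.univ j' (fun l => (jordanBlock lam k ^ m) i l)]
        simp
      rw [hsum, ih, ih]
      have hj'v : (j' : ℕ) = (j : ℕ) - 1 := rfl
      by_cases h : (i : ℕ) ≤ (j : ℕ)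
      · simp only [if_pos h]
        by_cases hij : (i : ℕ) = (j : ℕ)
        · -- d = 0
          rw [if_neg (show ¬ ((i:ℕ) ≤ (j':ℕ)) by rw [hj'v]; omega)]
          have hd : (j : ℕ) - (i : ℕ) = 0 := by omega
          rw [hd]
          simp only [Nat.choose_zero_right, Nat.cast_one, one_mul, Nat.sub_zero, pow_succ,
            add_zero]
        · -- i < j, d ≥ 1
          have hi' : (i : ℕ) ≤ (j' : ℕ) := by rw [hj'v]; omega
          rw [if_pos hi']
          set d : ℕ := (j : ℕ) - (i : ℕ) with hd
          have hd1 : 1 ≤ d := by omega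
          have hd' : (j' : ℕ) - (i : ℕ) = d - 1 := by rw [hj'v]; omega
          rw [hd']
          obtain ⟨e, he⟩ : ∃ e, d = e + 1 := ⟨d - 1, by omega⟩
          rw [he]
          have hpascal : (m + 1).choose (e + 1) = m.choose e + m.choose (e + 1) :=
            Nat.choose_succ_succ m e
          rw [hpascal]
          push_cast
          by_cases hem : e + 1 ≤ m
          · have : m - (e + 1) + 1 = m - e := by omega
            rw [← this, pow_succ]
            ring
          · have h0 : m.choose (e + 1) = 0 := Nat.choose_eq_zero_of_lt (by omega)
            rw [h0]
            push_cast
            ring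
      · simp only [if_neg h, if_neg (show ¬ ((i:ℕ) ≤ (j':ℕ)) by rw [hj'v]; omega), zero_mul,
          add_zero]


lemma choose_mono_left {m d e : ℕ} (hde : d ≤ e) (he : e ≤ m / 2) :
    m.choose d ≤ m.choose e := by
  induction e, hde using Nat.le_induction with
  | base => exact le_rfl
  | succ e hde ih =>
    exact le_trans (ih (by omega)) (Nat.choose_le_succ_of_lt_half_left (by omega))

lemma choose_ratio_tendsto (n d : ℕ) (hd : d < n) :
    Tendsto (fun m : ℕ => ((m.choose d : ℝ) / (m.choose n : ℝ))) atTop (𝓝 0) := by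
  have hbound : Tendsto (fun m : ℕ => (n : ℝ) / ((m - (n - 1) : ℕ) : ℝ)) atTop (𝓝 0) := by
    apply Tendsto.div_atTop tendsto_const_nhds
    exact tendsto_natCast_atTop_atTop.comp (tendsto_sub_atTop_nat (n - 1))
  apply tendsto_of_tendsto_of_tendsto_of_le_of_le' tendsto_const_nhds hbound
  · filter_upwards with m
    positivity
  · filter_upwards [eventually_ge_atTop (2 * n)] with m hm
    have hn1 : 1 ≤ n := by omega
    have hpos : 0 < m.choose n := Nat.choose_pos (by omega)
    have hkey : m.choose n * n = m.choose (n - 1) * (m - (n - 1)) := by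
      have := Nat.choose_succ_right_eq m (n - 1)
      have hnn : n - 1 + 1 = n := by omega
      rw [hnn] at this
      exact this
    have hle : m.choose d ≤ m.choose (n - 1) := choose_mono_left (by omega) (by omega)
    rw [div_le_div_iff₀ (by exact_mod_cast hpos) (by
      have : 0 < m - (n - 1) := by omega
      exact_mod_cast this)]
    calc (m.choose d : ℝ) * ((m - (n - 1) : ℕ) : ℝ)
        ≤ (m.choose (n - 1) : ℝ) * ((m - (n - 1) : ℕ) : ℝ) := by
          have : (m.choose d : ℝ) ≤ m.choose (n - 1) := by exact_mod_cast hle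
          apply mul_le_mul_of_nonneg_right this (by positivity)
      _ = (n : ℝ) * (m.choose n) := by exact_mod_cast hkey.symm.trans (Nat.mul_comm _ _)

/-- behaviour of the normalized powers `(1 / C(m, n)) • J(λ, n+1)^m`. -/
theorem jordanBlock_normalized_pow (lam : ℂ) (hlam : ‖lam‖ = 1)
    (n : ℕ) (hn : 1 ≤ n) :
    (∀ i j : Fin (n + 1), (i, j) ≠ (0, Fin.last n) →
      Tendsto (fun m : ℕ =>
          (1 / (m.choose n : ℂ)) * ((jordanBlock lam (n + 1)) ^ m) i j)
        atTop (𝓝 0)) ∧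
    Tendsto (fun m : ℕ =>
        ‖(1 / (m.choose n : ℂ)) *
          ((jordanBlock lam (n + 1)) ^ m) 0 (Fin.last n)‖)
      atTop (𝓝 1) := by
  constructor
  · intro i j hne
    by_cases hij : (i : ℕ) ≤ (j : ℕ)
    · set d : ℕ := (j : ℕ) - (i : ℕ) with hdd
      have hdn : d < n := by
        have hj : (j : ℕ) ≤ n := Nat.lt_succ_iff.mp j.isLt
        have hd_le : d ≤ n := by omega
        rcases lt_or_eq_of_le hd_le with h | h
        · exact h
        · exfalso
          apply hne
          have hi0 : (i : ℕ) = 0 := by omega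
          have hjn : (j : ℕ) = n := by omega
          have : i = 0 := Fin.ext (by simpa using hi0)
          have hj' : j = Fin.last n := Fin.ext (by simpa using hjn)
          rw [this, hj']
      rw [tendsto_zero_iff_norm_tendsto_zero]
      have habs : ∀ m : ℕ, ‖(1 / (m.choose n : ℂ)) * ((jordanBlock lam (n + 1)) ^ m) i j‖
          = (m.choose d : ℝ) / (m.choose n : ℝ) := by
        intro m
        rw [jordanBlock_pow_apply, if_pos hij, ← hdd]
        rw [norm_mul, norm_mul, norm_pow, hlam, one_pow, mul_one]
        simp only [one_div, norm_inv, Complex.norm_natCast]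
        rw [inv_mul_eq_div]
      simp only [habs]
      exact choose_ratio_tendsto n d hdn
    · have hz : ∀ m : ℕ, (1 / (m.choose n : ℂ)) * ((jordanBlock lam (n + 1)) ^ m) i j = 0 := by
        intro m
        rw [jordanBlock_pow_apply, if_neg hij, mul_zero]
      simp only [hz]
      exact tendsto_const_nhds
  · apply Tendsto.congr' _ tendsto_const_nhds
    filter_upwards [eventually_ge_atTop n] with m hm
    have hpos : 0 < m.choose n := Nat.choose_pos hm
    have h0 : ((0 : Fin (n + 1)) : ℕ) = 0 := rfl
    have hlast : ((Fin.last n : Fin (n + 1)) : ℕ) = n := rfl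
    rw [jordanBlock_pow_apply, if_pos (by rw [h0, hlast]; omega)]
    rw [h0, hlast, Nat.sub_zero]
    have hne : (m.choose n : ℂ) ≠ 0 := by exact_mod_cast hpos.ne'
    rw [one_div, ← mul_assoc, inv_mul_cancel₀ hne, one_mul]
    rw [norm_pow, hlam, one_pow]
end

section
/- Let λ ∈ ℂ with |λ| = 1 and n ≥ 1. Then the normalized inverse powers (1 / C(m+n-1, n)) · J(λ, n+1)^{-m} satisfy: every entry except the (1, n+1)-entry tends to 0 as m → ∞, while the (1, n+1)-entry has modulus tending to 1. -/
open Filter Topology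

noncomputable def jc (lam : ℂ) (m d : ℕ) : ℂ :=
  (-1) ^ d * ((m + d - 1).choose d : ℂ) * (lam⁻¹) ^ (m + d)

noncomputable def jB (lam : ℂ) (n m : ℕ) : Matrix (Fin (n+1)) (Fin (n+1)) ℂ :=
  Matrix.of fun i j => if (i : ℕ) ≤ (j : ℕ) then jc lam m ((j : ℕ) - (i : ℕ)) else 0

lemma jhockey (m D : ℕ) :
    ∑ d ∈ Finset.range (D + 1), (m + d - 1).choose d = (m + D).choose D := by
  induction D with
  | zero => simp
  | succ D ih =>
    rw [Finset.sum_range_succ, ih, show m + (D + 1) - 1 = m + D by omega]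
    show (m + D).choose D + (m + D).choose (D + 1) = ((m + D) + 1).choose (D + 1)
    rw [Nat.choose_succ_succ]

lemma jB_zero (lam : ℂ) (n : ℕ) : jB lam n 0 = 1 := by
  ext i j
  by_cases hij : i = j
  · subst hij; simp [jB, jc, Matrix.one_apply]
  · rw [Matrix.one_apply_ne hij]
    simp only [jB, Matrix.of_apply, jc]
    by_cases h : (i : ℕ) ≤ (j : ℕ)
    · have hne : (i : ℕ) ≠ (j : ℕ) := fun hh => hij (Fin.ext hh)
      rw [if_pos h, Nat.choose_eq_zero_of_lt (by omega)]
      simp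
    · rw [if_neg h]

lemma jordan_mul_jB_one (lam : ℂ) (hlam : lam ≠ 0) (n : ℕ) :
    jordanBlock lam (n+1) * jB lam n 1 = 1 := by
  ext i j
  rw [Matrix.mul_apply]
  have hsplit : ∀ k : Fin (n+1), jordanBlock lam (n+1) i k * jB lam n 1 k j
      = lam * (if k = i then jB lam n 1 i j else 0)
        + (if (k : ℕ) = (i : ℕ) + 1 then jB lam n 1 k j else 0) := by
    intro k
    simp only [jordanBlock]
    by_cases h1 : (k : ℕ) = (i : ℕ)
    · have hk : k = i := Fin.ext h1
      subst hk
      simp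
    · have hk : k ≠ i := fun h => h1 (by rw [h])
      rw [if_neg h1, if_neg hk, mul_zero, zero_add]
      split_ifs with h2
      · rw [one_mul]
      · rw [zero_mul]
  rw [Finset.sum_congr rfl (fun k _ => hsplit k), Finset.sum_add_distrib]
  have hS1 : ∑ k : Fin (n+1), (lam * (if k = i then jB lam n 1 i j else 0))
      = lam * jB lam n 1 i j := by
    rw [← Finset.mul_sum, Finset.sum_ite_eq' Finset.univ i (fun _ => jB lam n 1 i j)]
    simp
  rw [hS1]
  have hjle : (j : ℕ) ≤ n := Nat.lt_succ_iff.mp j.isLt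
  by_cases hi : (i : ℕ) < n
  · set i' : Fin (n+1) := ⟨(i : ℕ) + 1, by omega⟩ with hi'
    have hS2 : ∑ k : Fin (n+1), (if (k : ℕ) = (i : ℕ) + 1 then jB lam n 1 k j else 0)
        = jB lam n 1 i' j := by
      have : ∀ k : Fin (n+1), (if (k : ℕ) = (i : ℕ) + 1 then jB lam n 1 k j else 0)
          = (if k = i' then jB lam n 1 i' j else 0) := by
        intro k
        by_cases h : (k : ℕ) = (i : ℕ) + 1
        · have : k = i' := Fin.ext h
          subst this; simp [h]
        · rw [if_neg h, if_neg (fun hh => h (by rw [hh]))]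
      rw [Finset.sum_congr rfl (fun k _ => this k),
        Finset.sum_ite_eq' Finset.univ i' (fun _ => jB lam n 1 i' j)]
      simp
    rw [hS2]
    rcases lt_trichotomy (j : ℕ) (i : ℕ) with h | h | h
    · rw [Matrix.one_apply_ne (fun hh => by omega)]
      simp only [jB, Matrix.of_apply]
      rw [if_neg (by omega), if_neg (show ¬ ((i : ℕ) + 1 ≤ (j : ℕ)) by omega)]
      ring
    · have hji : j = i := Fin.ext h
      subst hji
      rw [Matrix.one_apply_eq]
      simp only [jB, Matrix.of_apply]
      rw [if_pos le_rfl, if_neg (show ¬ ((j : ℕ) + 1 ≤ (j : ℕ)) by omega)]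
      simp only [Nat.sub_self, jc]
      simp [mul_inv_cancel₀ hlam]
    · rw [Matrix.one_apply_ne (fun hh => by omega)]
      simp only [jB, Matrix.of_apply]
      rw [if_pos (by omega), if_pos (show (i : ℕ) + 1 ≤ (j : ℕ) by omega)]
      obtain ⟨e, he⟩ : ∃ e, (j : ℕ) - (i : ℕ) = e + 1 := ⟨(j : ℕ) - i - 1, by omega⟩
      have h2 : (j : ℕ) - ((i : ℕ) + 1) = e := by omega
      rw [he, h2]
      simp only [jc]
      have hch1 : (1 + (e + 1) - 1).choose (e + 1) = 1 := by
        rw [show 1 + (e + 1) - 1 = e + 1 by omega, Nat.choose_self]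
      have hch2 : (1 + e - 1).choose e = 1 := by
        rw [show 1 + e - 1 = e by omega, Nat.choose_self]
      rw [hch1, hch2]
      push_cast
      rw [show 1 + (e + 1) = (1 + e) + 1 by omega, pow_succ, pow_succ]
      field_simp
      ring
  · have hin : (i : ℕ) = n := by omega
    have hS2 : ∑ k : Fin (n+1), (if (k : ℕ) = (i : ℕ) + 1 then jB lam n 1 k j else 0) = 0 := by
      apply Finset.sum_eq_zero
      intro k _
      rw [if_neg (by have := Nat.lt_succ_iff.mp k.isLt; omega)]
    rw [hS2, add_zero]
    rcases eq_or_lt_of_le (show (j : ℕ) ≤ (i : ℕ) by omega) with h | h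
    · have hji : j = i := Fin.ext h
      subst hji
      rw [Matrix.one_apply_eq]
      simp only [jB, Matrix.of_apply]
      rw [if_pos le_rfl]
      simp only [Nat.sub_self, jc]
      simp [mul_inv_cancel₀ hlam]
    · rw [Matrix.one_apply_ne (fun hh => by omega)]
      simp only [jB, Matrix.of_apply]
      rw [if_neg (by omega)]
      ring

lemma jB_mul_jB_one (lam : ℂ) (n m : ℕ) :
    jB lam n m * jB lam n 1 = jB lam n (m + 1) := by
  ext i j
  rw [Matrix.mul_apply]
  set g : ℕ → ℂ := fun k =>
    if (i : ℕ) ≤ k ∧ k ≤ (j : ℕ) then jc lam m (k - (i : ℕ)) * jc lam 1 ((j : ℕ) - k) else 0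
    with hg
  have hterm : ∀ k : Fin (n+1), jB lam n m i k * jB lam n 1 k j = g (k : ℕ) := by
    intro k
    simp only [jB, Matrix.of_apply, hg]
    by_cases h1 : (i : ℕ) ≤ (k : ℕ)
    · by_cases h2 : (k : ℕ) ≤ (j : ℕ)
      · rw [if_pos h1, if_pos h2, if_pos ⟨h1, h2⟩]
      · rw [if_neg h2, if_neg (show ¬((i : ℕ) ≤ (k : ℕ) ∧ (k : ℕ) ≤ (j : ℕ)) from
          fun h => h2 h.2), mul_zero]
    · rw [if_neg h1, if_neg (show ¬((i : ℕ) ≤ (k : ℕ) ∧ (k : ℕ) ≤ (j : ℕ)) from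
        fun h => h1 h.1), zero_mul]
  rw [Finset.sum_congr rfl (fun k _ => hterm k), Fin.sum_univ_eq_sum_range]
  by_cases hij : (i : ℕ) ≤ (j : ℕ)
  · have hjle : (j : ℕ) ≤ n := Nat.lt_succ_iff.mp j.isLt
    have hsub : Finset.Ico (i : ℕ) ((j : ℕ) + 1) ⊆ Finset.range (n + 1) := by
      intro x hx
      simp only [Finset.mem_Ico] at hx
      simp only [Finset.mem_range]
      omega
    rw [← Finset.sum_subset hsub (by
      intro x hx hnx
      simp only [Finset.mem_range] at hx
      simp only [Finset.mem_Ico, not_and_or, not_le, not_lt] at hnx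
      rw [hg]
      simp only
      rw [if_neg (by omega)])]
    rw [Finset.sum_Ico_eq_sum_range]
    set D := (j : ℕ) - (i : ℕ) with hD
    rw [show (j : ℕ) + 1 - (i : ℕ) = D + 1 by omega]
    have hstep : ∀ d ∈ Finset.range (D + 1),
        g ((i : ℕ) + d) = (-1) ^ D * ((m + d - 1).choose d : ℂ) * (lam⁻¹) ^ (m + 1 + D) := by
      intro d hd
      simp only [Finset.mem_range] at hd
      rw [hg]
      simp only
      rw [if_pos (by omega), show (i : ℕ) + d - (i : ℕ) = d by omega,
        show (j : ℕ) - ((i : ℕ) + d) = D - d by omega]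
      simp only [jc]
      rw [show (1 + (D - d) - 1).choose (D - d) = 1 by
        rw [show 1 + (D - d) - 1 = D - d by omega, Nat.choose_self]]
      rw [show ((-1 : ℂ)) ^ d * ((m + d - 1).choose d : ℂ) * lam⁻¹ ^ (m + d) *
          ((-1) ^ (D - d) * (1 : ℕ) * lam⁻¹ ^ (1 + (D - d)))
        = ((-1) ^ d * (-1) ^ (D - d)) * ((m + d - 1).choose d : ℂ) *
          (lam⁻¹ ^ (m + d) * lam⁻¹ ^ (1 + (D - d))) by push_cast; ring]
      rw [← pow_add, ← pow_add, show d + (D - d) = D by omega,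
        show m + d + (1 + (D - d)) = m + 1 + D by omega]
    rw [Finset.sum_congr rfl hstep]
    rw [← Finset.sum_mul, ← Finset.mul_sum, ← Nat.cast_sum, jhockey]
    simp only [jB, Matrix.of_apply, jc]
    rw [if_pos hij, ← hD, show m + 1 + D - 1 = m + D by omega]
  · rw [Finset.sum_eq_zero (by
      intro x hx
      rw [hg]
      simp only
      rw [if_neg (by omega)])]
    simp only [jB, Matrix.of_apply]
    rw [if_neg hij]

lemma jordan_inv_pow (lam : ℂ) (hlam : lam ≠ 0) (n m : ℕ) :
    ((jordanBlock lam (n+1))⁻¹) ^ m = jB lam n m := by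
  have hinv : (jordanBlock lam (n+1))⁻¹ = jB lam n 1 :=
    Matrix.inv_eq_right_inv (jordan_mul_jB_one lam hlam n)
  induction m with
  | zero => simpa using (jB_zero lam n).symm
  | succ m ih => rw [pow_succ, ih, hinv, jB_mul_jB_one]

lemma jchoose_lower (m n : ℕ) : (m : ℝ) ^ n ≤ (n.factorial : ℝ) * ((m + n - 1).choose n : ℝ) := by
  have h1 : m ^ n ≤ (m + n - 1).descFactorial n :=
    le_trans (Nat.pow_le_pow_left (by omega) n) (Nat.pow_sub_le_descFactorial (m + n - 1) n)
  rw [Nat.descFactorial_eq_factorial_mul_choose] at h1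
  exact_mod_cast h1

/-- behaviour of the normalized inverse powers
`(1 / C(m+n-1, n)) • J(λ, n+1)^{-m}`. -/
theorem jordanBlock_normalized_inv_pow (lam : ℂ) (hlam : ‖lam‖ = 1)
    (n : ℕ) (hn : 1 ≤ n) :
    (∀ i j : Fin (n + 1), (i, j) ≠ (0, Fin.last n) →
      Tendsto (fun m : ℕ =>
          (1 / ((m + n - 1).choose n : ℂ)) *
            (((jordanBlock lam (n + 1))⁻¹) ^ m) i j)
        atTop (𝓝 0)) ∧
    Tendsto (fun m : ℕ =>
        ‖(1 / ((m + n - 1).choose n : ℂ)) *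
          (((jordanBlock lam (n + 1))⁻¹) ^ m) 0 (Fin.last n)‖)
      atTop (𝓝 1) := by
  have hlam0 : lam ≠ 0 := by
    intro h; rw [h] at hlam; simp at hlam
  have hpow : ∀ m : ℕ, ((jordanBlock lam (n+1))⁻¹) ^ m = jB lam n m :=
    jordan_inv_pow lam hlam0 n
  have habsinv : ‖lam⁻¹‖ = 1 := by
    rw [norm_inv, hlam, inv_one]
  constructor
  · intro i j hij
    by_cases hle : (i : ℕ) ≤ (j : ℕ)
    · set d := (j : ℕ) - (i : ℕ) with hd
      have hjle : (j : ℕ) ≤ n := Nat.lt_succ_iff.mp j.isLt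
      have hdn : d < n := by
        rcases Nat.lt_or_ge d n with h | h
        · exact h
        · exfalso
          have hjn : (j : ℕ) = n := by omega
          have hin : (i : ℕ) = 0 := by omega
          refine hij ?_
          have hi0 : i = 0 := Fin.ext (by simpa using hin)
          have hjl : j = Fin.last n := Fin.ext (by simpa [Fin.last] using hjn)
          rw [hi0, hjl]
      refine squeeze_zero_norm' ?_
        (tendsto_const_div_atTop_nhds_zero_nat ((n.factorial * 2 ^ (n - 1) : ℕ) : ℝ))
      · filter_upwards [eventually_ge_atTop (n + 1)] with m hm
        rw [hpow m]
        have hentry : jB lam n m i j = jc lam m d := by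
          simp only [jB, Matrix.of_apply]
          rw [if_pos hle]
        rw [hentry]
        have hnorm : ‖(1 / ((m + n - 1).choose n : ℂ)) * jc lam m d‖
            = ((m + d - 1).choose d : ℝ) / ((m + n - 1).choose n : ℝ) := by
          simp only [jc, norm_mul, norm_div, norm_one, norm_pow]
          rw [Complex.norm_natCast, Complex.norm_natCast]
          have h1 : ‖(-1 : ℂ)‖ = 1 := by simp
          have h2 : ‖lam⁻¹‖ = 1 := habsinv
          rw [h1, h2, one_pow, one_pow, mul_one, one_div, ← div_eq_inv_mul, one_mul]
        rw [hnorm]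
        have hm1 : 1 ≤ m := by omega
        have hCn0 : 0 < ((m + n - 1).choose n : ℝ) := by
          have : 0 < (m + n - 1).choose n := Nat.choose_pos (by omega)
          exact_mod_cast this
        have hm0 : 0 < (m : ℝ) := by exact_mod_cast (by omega : 0 < m)
        rw [div_le_div_iff₀ hCn0 hm0]
        have hCd : ((m + d - 1).choose d : ℝ) ≤ (2 : ℝ) ^ (n - 1) * (m : ℝ) ^ (n - 1) := by
          have hnat : (m + d - 1).choose d ≤ 2 ^ (n - 1) * m ^ (n - 1) := by
            calc (m + d - 1).choose d ≤ (m + d - 1) ^ d := Nat.choose_le_pow _ _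
              _ ≤ (2 * m) ^ d := Nat.pow_le_pow_left (by omega) d
              _ = 2 ^ d * m ^ d := by rw [Nat.mul_pow]
              _ ≤ 2 ^ (n - 1) * m ^ (n - 1) := by
                  apply Nat.mul_le_mul
                  · exact Nat.pow_le_pow_right (by omega) (by omega)
                  · exact Nat.pow_le_pow_right (by omega) (by omega)
          exact_mod_cast hnat
        have hCn : (m : ℝ) ^ n ≤ (n.factorial : ℝ) * ((m + n - 1).choose n : ℝ) :=
          jchoose_lower m n
        have hmpow : (m : ℝ) ^ (n - 1) * (m : ℝ) = (m : ℝ) ^ n := by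
          rw [← pow_succ]
          congr 1
          omega
        calc ((m + d - 1).choose d : ℝ) * (m : ℝ)
            ≤ (2 : ℝ) ^ (n - 1) * (m : ℝ) ^ (n - 1) * (m : ℝ) := by
              apply mul_le_mul_of_nonneg_right hCd (le_of_lt hm0)
          _ = (2 : ℝ) ^ (n - 1) * ((m : ℝ) ^ n) := by rw [mul_assoc, hmpow]
          _ ≤ (2 : ℝ) ^ (n - 1) * ((n.factorial : ℝ) * ((m + n - 1).choose n : ℝ)) := by
              apply mul_le_mul_of_nonneg_left hCn (by positivity)
          _ = ((n.factorial * 2 ^ (n - 1) : ℕ) : ℝ) * ((m + n - 1).choose n : ℝ) := by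
              push_cast; ring
    · have h0 : (fun m : ℕ => (1 / ((m + n - 1).choose n : ℂ)) *
          (((jordanBlock lam (n + 1))⁻¹) ^ m) i j) = fun _ => (0 : ℂ) := by
        funext m
        rw [hpow m]
        simp only [jB, Matrix.of_apply]
        rw [if_neg hle, mul_zero]
      rw [h0]
      exact tendsto_const_nhds
  · apply Tendsto.congr' (f₁ := fun _ : ℕ => (1 : ℝ))
    · filter_upwards [eventually_ge_atTop 1] with m hm
      rw [hpow m]
      have hentry : jB lam n m 0 (Fin.last n) = jc lam m n := by
        simp only [jB, Matrix.of_apply]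
        rw [if_pos (by simp [Fin.last])]
        simp [Fin.last]
      rw [hentry]
      have hCn0 : ((m + n - 1).choose n : ℝ) ≠ 0 := by
        have : 0 < (m + n - 1).choose n := Nat.choose_pos (by omega)
        exact_mod_cast this.ne'
      rw [show ((1 : ℂ) / ((m + n - 1).choose n : ℂ)) * jc lam m n
          = jc lam m n / ((m + n - 1).choose n : ℂ) by ring]
      rw [norm_div, Complex.norm_natCast]
      simp only [jc, norm_mul, norm_pow, norm_inv, hlam, Complex.norm_natCast]
      rw [show ‖(-1 : ℂ)‖ = 1 by simp, one_pow, inv_one, one_pow, mul_one, one_mul,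
        div_self hCn0]
    · exact tendsto_const_nhds
end

section
/- Let λ₁, λ₂ ∈ ℂ with 0 < |λ₁| < |λ₂|, and let k₁, k₂ ≥ 1. For γ = diag(λ₁·J(1,k₁), λ₂·J(1,k₂)), the normalized inverse powers (λ₁^m / C(m+k₁-2, k₁-1)) · γ^{-m} converge entrywise as m → ∞ to the matrix whose only nonzero entry has modulus 1 and lies in position (1, k₁), with the entire second block tending to 0. -/
open Filter Topology

/-- inverse of jordan block with eigenvalue 1 -/
def Kmat (k : ℕ) : Matrix (Fin k) (Fin k) ℂ :=
  fun i j => if (i : ℕ) ≤ (j : ℕ) then (-1) ^ ((j : ℕ) - (i : ℕ)) else 0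

/-- m-th power of Kmat, for m ≥ 1 -/
def Pmat (k m : ℕ) : Matrix (Fin k) (Fin k) ℂ :=
  fun i j => if (i : ℕ) ≤ (j : ℕ) then
    (-1) ^ ((j : ℕ) - (i : ℕ)) * ((m - 1 + ((j : ℕ) - (i : ℕ))).choose ((j : ℕ) - (i : ℕ)) : ℕ)
    else 0

lemma jordan_mul_K (k : ℕ) : jordanBlock 1 k * Kmat k = 1 := by
  ext i j
  rw [Matrix.mul_apply]
  have hsplit : ∀ l : Fin k, jordanBlock 1 k i l * Kmat k l j =
      (if l = i then Kmat k l j else 0) +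
      (if (l : ℕ) = (i : ℕ) + 1 then Kmat k l j else 0) := by
    intro l
    simp only [jordanBlock, Fin.ext_iff]
    split_ifs with h1 h2 h2 <;> simp_all <;> omega
  rw [Finset.sum_congr rfl (fun l _ => hsplit l)]
  rw [Finset.sum_add_distrib, Finset.sum_ite_eq' Finset.univ i (fun l => Kmat k l j)]
  simp only [Finset.mem_univ, if_true]
  by_cases h : (i : ℕ) + 1 < k
  · have : ∑ l : Fin k, (if (l : ℕ) = (i : ℕ) + 1 then Kmat k l j else 0)
        = Kmat k ⟨(i : ℕ) + 1, h⟩ j := by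
      rw [Finset.sum_eq_single (⟨(i : ℕ) + 1, h⟩ : Fin k)]
      · simp
      · intro b _ hb; rw [if_neg]; simpa [Fin.ext_iff] using hb
      · simp
    rw [this]
    simp only [Kmat, Matrix.one_apply, Fin.ext_iff]
    rcases lt_trichotomy (i : ℕ) (j : ℕ) with hij | hij | hij
    · rw [if_pos (le_of_lt hij), if_pos (by omega), if_neg (by omega)]
      have : (j : ℕ) - (i : ℕ) = ((j : ℕ) - ((i : ℕ) + 1)) + 1 := by omega
      rw [this, pow_succ]
      ring
    · rw [if_pos hij.le, if_neg (by omega), if_pos hij]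
      simp [hij, Nat.sub_self]
    · rw [if_neg (by omega), if_neg (by omega), if_neg (by omega)]
      simp
  · have : ∑ l : Fin k, (if (l : ℕ) = (i : ℕ) + 1 then Kmat k l j else 0) = 0 := by
      apply Finset.sum_eq_zero; intro l _; rw [if_neg]
      have := l.isLt; omega
    rw [this, add_zero]
    simp only [Kmat, Matrix.one_apply, Fin.ext_iff]
    have := j.isLt
    by_cases hij : (i : ℕ) = (j : ℕ)
    · rw [if_pos hij.le, if_pos hij]; simp [hij]
    · rw [if_neg (by omega), if_neg hij]

lemma hockey (n D : ℕ) : ∑ d ∈ Finset.range (D + 1), (n + d).choose d = (n + D + 1).choose D := by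
  induction D with
  | zero => simp
  | succ D ih =>
    rw [Finset.sum_range_succ, ih, show n + (D + 1) = n + D + 1 by omega,
      show n + D + 1 + 1 = (n + D + 1) + 1 from rfl, Nat.choose_succ_succ' (n + D + 1) D]

lemma Kpow (k : ℕ) : ∀ m, 1 ≤ m → Kmat k ^ m = Pmat k m := by
  intro m hm
  induction m, hm using Nat.le_induction with
  | base =>
    ext i j
    simp [Kmat, Pmat]
  | succ m hm ih =>
    rw [pow_succ, ih]
    ext i j
    rw [Matrix.mul_apply]
    by_cases hij : (i : ℕ) ≤ (j : ℕ)
    · have hterm : ∀ l : Fin k, Pmat k m i l * Kmat k l j =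
          (-1) ^ ((j : ℕ) - (i : ℕ)) *
          (if (i : ℕ) ≤ (l : ℕ) ∧ (l : ℕ) ≤ (j : ℕ) then
            ((m - 1 + ((l : ℕ) - (i : ℕ))).choose ((l : ℕ) - (i : ℕ)) : ℂ) else 0) := by
        intro l
        by_cases hA : (i : ℕ) ≤ (l : ℕ)
        · by_cases hB : (l : ℕ) ≤ (j : ℕ)
          · simp only [Pmat, Kmat, if_pos hA, if_pos hB, if_pos (And.intro hA hB)]
            have h : ((j : ℕ) - (l : ℕ)) + ((l : ℕ) - (i : ℕ)) = (j : ℕ) - (i : ℕ) := by omega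
            rw [← h, pow_add]; ring
          · simp only [Pmat, Kmat, if_pos hA, if_neg hB, mul_zero]
            rw [if_neg (by omega : ¬((i : ℕ) ≤ (l : ℕ) ∧ (l : ℕ) ≤ (j : ℕ))), mul_zero]
        · simp only [Pmat, Kmat, if_neg hA, zero_mul]
          rw [if_neg (by omega : ¬((i : ℕ) ≤ (l : ℕ) ∧ (l : ℕ) ≤ (j : ℕ))), mul_zero]
      rw [Finset.sum_congr rfl (fun l _ => hterm l), ← Finset.mul_sum]
      have hre := Fin.sum_univ_eq_sum_range (fun x : ℕ =>
        if (i : ℕ) ≤ x ∧ x ≤ (j : ℕ) then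
          ((m - 1 + (x - (i : ℕ))).choose (x - (i : ℕ)) : ℂ) else 0) k
      rw [hre]
      have hmem : ∀ x : ℕ, ((i : ℕ) ≤ x ∧ x ≤ (j : ℕ)) ↔ x ∈ Finset.Icc (i : ℕ) (j : ℕ) := by
        intro x; rw [Finset.mem_Icc]
      simp only [hmem]
      rw [Finset.sum_ite_mem, Finset.inter_eq_right.mpr
        (fun x hx => Finset.mem_range.mpr (lt_of_le_of_lt (Finset.mem_Icc.mp hx).2 j.isLt)),
        ← Finset.Ico_add_one_right_eq_Icc, Finset.sum_Ico_eq_sum_range]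
      simp only [Nat.add_sub_cancel_left]
      rw [show (j : ℕ) + 1 - (i : ℕ) = ((j : ℕ) - (i : ℕ)) + 1 by omega]
      have hc : ∑ d ∈ Finset.range (((j : ℕ) - (i : ℕ)) + 1),
          (((m - 1 + d).choose d : ℕ) : ℂ)
          = (((m - 1 + ((j : ℕ) - (i : ℕ)) + 1).choose ((j : ℕ) - (i : ℕ)) : ℕ) : ℂ) := by
        rw [← Nat.cast_sum, hockey]
      rw [hc]
      simp only [Pmat, if_pos hij]
      rw [show m - 1 + ((j : ℕ) - (i : ℕ)) + 1 = m + 1 - 1 + ((j : ℕ) - (i : ℕ)) by omega]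
    · have hz : ∀ l : Fin k, Pmat k m i l * Kmat k l j = 0 := by
        intro l
        simp only [Pmat, Kmat]
        split_ifs with h1 h2 <;> first | (exfalso; omega) | ring
      rw [Finset.sum_congr rfl (fun l _ => hz l), Finset.sum_const, smul_zero]
      rw [Pmat, if_neg hij]

lemma fromBlocks_pow {n₁ n₂ : ℕ} (A : Matrix (Fin n₁) (Fin n₁) ℂ)
    (B : Matrix (Fin n₂) (Fin n₂) ℂ) (m : ℕ) :
    (Matrix.fromBlocks A 0 0 B) ^ m = Matrix.fromBlocks (A ^ m) 0 0 (B ^ m) := by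
  induction m with
  | zero => simp [Matrix.fromBlocks_one]
  | succ m ih =>
    rw [pow_succ, ih]
    simp [Matrix.fromBlocks_multiply, pow_succ]

lemma choose_diag_mono (n : ℕ) : Monotone (fun j => (n + j).choose j) := by
  apply monotone_nat_of_le_succ
  intro j
  rw [show n + (j + 1) = (n + j) + 1 by omega, Nat.choose_succ_succ' (n + j) j]
  omega

lemma ratio_bound (K d n : ℕ) (hd : d < K) :
    (n + 1) * (n + d).choose d ≤ K * (n + K).choose K := by
  have h1 : (n + 1) * (n + d).choose d ≤ (n + d + 1) * (n + d).choose d :=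
    Nat.mul_le_mul_right _ (by omega)
  have h2 : (n + d + 1) * (n + d).choose d = (n + d + 1).choose (d + 1) * (d + 1) :=
    Nat.add_one_mul_choose_eq (n + d) d
  have h3 : (n + (d + 1)).choose (d + 1) ≤ (n + K).choose K := choose_diag_mono n (by omega)
  calc (n + 1) * (n + d).choose d ≤ (n + d + 1).choose (d + 1) * (d + 1) := h1.trans h2.le
    _ = (d + 1) * (n + (d + 1)).choose (d + 1) := by rw [mul_comm, show n + d + 1 = n + (d+1) by omega]
    _ ≤ K * (n + K).choose K := Nat.mul_le_mul hd h3

/-- for `γ = diag(λ₁ J(1,k₁), λ₂ J(1,k₂))` with `0 < |λ₁| < |λ₂|`,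
the normalized inverse powers `(λ₁^m / C(m+k₁-2, k₁-1)) γ^{-m}` converge
entrywise: all entries except the `(1,k₁)`-entry tend to `0`, and the
`(1,k₁)`-entry tends to `(-1)^(k₁-1)`, a value of modulus `1`. -/
theorem loxoparabolic_normalized_inv_pow (lam₁ lam₂ : ℂ)
    (h₁ : 0 < ‖lam₁‖) (h₁₂ : ‖lam₁‖ < ‖lam₂‖)
    (k₁ k₂ : ℕ) (hk₁ : 1 ≤ k₁) (hk₂ : 1 ≤ k₂)
    (γ : Matrix (Fin k₁ ⊕ Fin k₂) (Fin k₁ ⊕ Fin k₂) ℂ)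
    (hγ : γ = Matrix.fromBlocks (lam₁ • jordanBlock 1 k₁) 0 0
      (lam₂ • jordanBlock 1 k₂)) :
    ∀ p q : Fin k₁ ⊕ Fin k₂,
      Tendsto (fun m : ℕ =>
          (lam₁ ^ m / ((m + k₁ - 2).choose (k₁ - 1) : ℂ)) * (((γ⁻¹) ^ m) p q))
        atTop
        (𝓝 (if p = Sum.inl ⟨0, by omega⟩ ∧ q = Sum.inl ⟨k₁ - 1, by omega⟩
          then (-1 : ℂ) ^ (k₁ - 1) else 0)) := by
  have hl1 : lam₁ ≠ 0 := norm_pos_iff.mp h₁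
  have hl2 : lam₂ ≠ 0 := norm_pos_iff.mp (h₁.trans h₁₂)
  have hinv : γ⁻¹ = Matrix.fromBlocks (lam₁⁻¹ • Kmat k₁) 0 0 (lam₂⁻¹ • Kmat k₂) := by
    apply Matrix.inv_eq_right_inv
    rw [hγ, Matrix.fromBlocks_multiply]
    have e1 : (lam₁ • jordanBlock 1 k₁) * (lam₁⁻¹ • Kmat k₁) = 1 := by
      rw [Matrix.smul_mul, Matrix.mul_smul, smul_smul, jordan_mul_K,
        mul_inv_cancel₀ hl1, one_smul]
    have e2 : (lam₂ • jordanBlock 1 k₂) * (lam₂⁻¹ • Kmat k₂) = 1 := by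
      rw [Matrix.smul_mul, Matrix.mul_smul, smul_smul, jordan_mul_K,
        mul_inv_cancel₀ hl2, one_smul]
    simp [e1, e2, Matrix.fromBlocks_one]
  have hpow : ∀ m : ℕ, (γ⁻¹) ^ m =
      Matrix.fromBlocks ((lam₁⁻¹) ^ m • (Kmat k₁) ^ m) 0 0 ((lam₂⁻¹) ^ m • (Kmat k₂) ^ m) := by
    intro m
    rw [hinv, fromBlocks_pow, smul_pow, smul_pow]
  have hone : ∀ m : ℕ, lam₁ ^ m * (lam₁⁻¹) ^ m = 1 := by
    intro m; rw [← mul_pow, mul_inv_cancel₀ hl1, one_pow]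
  have hdenpos : ∀ m : ℕ, 1 ≤ m → 0 < (m + k₁ - 2).choose (k₁ - 1) :=
    fun m hm => Nat.choose_pos (by omega)
  intro p q
  rcases p with i | i <;> rcases q with j | j
  · -- inl inl
    simp only [hpow, Matrix.fromBlocks_apply₁₁, Matrix.smul_apply, smul_eq_mul,
      Sum.inl.injEq, Fin.ext_iff]
    have hev : (fun m : ℕ => lam₁ ^ m / ((m + k₁ - 2).choose (k₁ - 1) : ℂ) *
          ((lam₁⁻¹) ^ m * ((Kmat k₁) ^ m) i j)) =ᶠ[atTop]
        (fun m : ℕ => Pmat k₁ m i j / ((m + k₁ - 2).choose (k₁ - 1) : ℂ)) := by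
      filter_upwards [eventually_ge_atTop 1] with m hm
      rw [Kpow k₁ m hm]
      calc lam₁ ^ m / ((m + k₁ - 2).choose (k₁ - 1) : ℂ) * ((lam₁⁻¹) ^ m * Pmat k₁ m i j)
          = (lam₁ ^ m * (lam₁⁻¹) ^ m) * Pmat k₁ m i j
            / ((m + k₁ - 2).choose (k₁ - 1) : ℂ) := by ring
        _ = Pmat k₁ m i j / ((m + k₁ - 2).choose (k₁ - 1) : ℂ) := by rw [hone m, one_mul]
    rw [tendsto_congr' hev]
    by_cases hc : (i : ℕ) = 0 ∧ (j : ℕ) = k₁ - 1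
    · rw [if_pos (by simpa using hc)]
      have hev2 : (fun m : ℕ => Pmat k₁ m i j / ((m + k₁ - 2).choose (k₁ - 1) : ℂ)) =ᶠ[atTop]
          (fun _ : ℕ => ((-1 : ℂ)) ^ (k₁ - 1)) := by
        filter_upwards [eventually_ge_atTop 1] with m hm
        have hne : (((m + k₁ - 2).choose (k₁ - 1) : ℕ) : ℂ) ≠ 0 :=
          Nat.cast_ne_zero.mpr (hdenpos m hm).ne'
        rw [Pmat, if_pos (by omega : (i : ℕ) ≤ (j : ℕ)), hc.1, hc.2, Nat.sub_zero,
          show m - 1 + (k₁ - 1) = m + k₁ - 2 by omega]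
        field_simp
      rw [tendsto_congr' hev2]
      exact tendsto_const_nhds
    · rw [if_neg (by simpa using hc)]
      by_cases hij : (i : ℕ) ≤ (j : ℕ)
      · have hd : (j : ℕ) - (i : ℕ) < k₁ - 1 := by
          have hj := j.isLt
          push_neg at hc
          omega
        apply squeeze_zero_norm' (a := fun m : ℕ => (k₁ : ℝ) / m)
        · filter_upwards [eventually_ge_atTop 1] with m hm
          have hden : (0 : ℝ) < ((m + k₁ - 2).choose (k₁ - 1) : ℕ) := by
            exact_mod_cast hdenpos m hm
          rw [Pmat, if_pos hij, norm_div, norm_mul, norm_pow, norm_neg, norm_one, one_pow,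
            one_mul, Complex.norm_natCast, Complex.norm_natCast]
          rw [div_le_div_iff₀ hden (by positivity : (0 : ℝ) < (m : ℝ))]
          have hnat : m * ((m - 1 + ((j : ℕ) - (i : ℕ))).choose ((j : ℕ) - (i : ℕ)))
              ≤ k₁ * ((m + k₁ - 2).choose (k₁ - 1)) := by
            have := ratio_bound (k₁ - 1) ((j : ℕ) - (i : ℕ)) (m - 1) hd
            rw [show m - 1 + 1 = m by omega, show m - 1 + (k₁ - 1) = m + k₁ - 2 by omega] at this
            exact this.trans (Nat.mul_le_mul_right _ (by omega))
          calc ((m - 1 + ((j : ℕ) - (i : ℕ))).choose ((j : ℕ) - (i : ℕ)) : ℝ) * m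
              = (m * ((m - 1 + ((j : ℕ) - (i : ℕ))).choose ((j : ℕ) - (i : ℕ))) : ℕ) := by
                push_cast; ring
            _ ≤ ((k₁ * ((m + k₁ - 2).choose (k₁ - 1)) : ℕ) : ℝ) := by exact_mod_cast hnat
            _ = (k₁ : ℝ) * ((m + k₁ - 2).choose (k₁ - 1) : ℕ) := by push_cast; ring
        · exact tendsto_const_div_atTop_nhds_zero_nat _
      · have : (fun m : ℕ => Pmat k₁ m i j / ((m + k₁ - 2).choose (k₁ - 1) : ℂ))
            = fun _ : ℕ => (0 : ℂ) := by
          funext m; rw [Pmat, if_neg hij, zero_div]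
        rw [this]
        exact tendsto_const_nhds
  · -- inl inr
    simp only [hpow, Matrix.fromBlocks_apply₁₂, Matrix.zero_apply, mul_zero]
    rw [if_neg (by simp)]
    exact tendsto_const_nhds
  · -- inr inl
    simp only [hpow, Matrix.fromBlocks_apply₂₁, Matrix.zero_apply, mul_zero]
    rw [if_neg (by simp)]
    exact tendsto_const_nhds
  · -- inr inr
    simp only [hpow, Matrix.fromBlocks_apply₂₂, Matrix.smul_apply, smul_eq_mul]
    rw [if_neg (by simp)]
    set d : ℕ := (j : ℕ) - (i : ℕ) with hdd
    set r : ℝ := ‖lam₁‖ / ‖lam₂‖ with hrr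
    have hr0 : 0 ≤ r := div_nonneg (norm_nonneg _) (norm_nonneg _)
    have hr1 : r < 1 := (div_lt_one (h₁.trans h₁₂)).mpr h₁₂
    apply squeeze_zero_norm' (a := fun m : ℕ => ((d + 1 : ℕ) : ℝ) ^ d * ((m : ℝ) ^ d * r ^ m))
    · filter_upwards [eventually_ge_atTop 1] with m hm
      have hden1 : (1 : ℝ) ≤ ((m + k₁ - 2).choose (k₁ - 1) : ℕ) := by
        exact_mod_cast hdenpos m hm
      have hP : ‖((Kmat k₂) ^ m) i j‖ ≤ (((m - 1 + d).choose d : ℕ) : ℝ) := by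
        rw [Kpow k₂ m hm, Pmat]
        split_ifs with h
        · rw [norm_mul, norm_pow, norm_neg, norm_one, one_pow, one_mul, Complex.norm_natCast]
        · simp
      have hP2 : (((m - 1 + d).choose d : ℕ) : ℝ) ≤ ((d + 1 : ℕ) : ℝ) ^ d * (m : ℝ) ^ d := by
        have hle : m - 1 + d ≤ m * (d + 1) := by
          have h' : d ≤ m * d := Nat.le_mul_of_pos_left d hm
          rw [Nat.mul_succ]; omega
        have hn : (m - 1 + d).choose d ≤ (m * (d + 1)) ^ d :=
          (Nat.choose_le_pow _ _).trans (Nat.pow_le_pow_left hle d)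
        calc (((m - 1 + d).choose d : ℕ) : ℝ) ≤ (((m * (d + 1)) ^ d : ℕ) : ℝ) := by
              exact_mod_cast hn
          _ = ((d + 1 : ℕ) : ℝ) ^ d * (m : ℝ) ^ d := by
              push_cast
              rw [mul_pow]
              ring
      calc ‖lam₁ ^ m / ((m + k₁ - 2).choose (k₁ - 1) : ℂ) *
            ((lam₂⁻¹) ^ m * ((Kmat k₂) ^ m) i j)‖
          = ‖lam₁‖ ^ m / ((m + k₁ - 2).choose (k₁ - 1) : ℕ) *
            (‖lam₂‖⁻¹ ^ m * ‖((Kmat k₂) ^ m) i j‖) := by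
            rw [norm_mul, norm_div, norm_mul, norm_pow, norm_pow, norm_inv,
              Complex.norm_natCast]
        _ ≤ ‖lam₁‖ ^ m / 1 *
            (‖lam₂‖⁻¹ ^ m * (((d + 1 : ℕ) : ℝ) ^ d * (m : ℝ) ^ d)) := by
            gcongr
            exact hP.trans hP2
        _ = ((d + 1 : ℕ) : ℝ) ^ d * ((m : ℝ) ^ d * r ^ m) := by
            rw [hrr, div_pow]
            field_simp
            ring_nf
            rw [← mul_pow, mul_inv_cancel₀ (norm_ne_zero_iff.mpr hl2), one_pow]
    · have := (tendsto_pow_const_mul_const_pow_of_lt_one d hr0 hr1).const_mul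
        (((d + 1 : ℕ) : ℝ) ^ d)
      simpa using this
end
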